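/- Let F : ℝ → ℂ be twice continuously differentiable with F(t̂) = 0, F'(t̂) ≠ 0, and Re(F''(t̂)·conj(F'(t̂))) ≠ 0. Then the Chu–Mei quotient is unbounded at the singular point t̂: with a(t) = |F(t)|, the quantity |a''(t)/a(t)| tends to +∞ as t → t̂ through values t ≠ t̂ (note F(t) ≠ 0 for t ≠ t̂ close to t̂, so the quotient is defined there). Hence boundedness of the Chu–Mei quotient at a singular point is a non-generic, exceptional property. -/

import Mathlib

open Real Filter Topology

lemma chu_mei_aux (g G1 G2 : ℝ → ℝ) (t₀ A B : ℝ)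
    (hg : ∀ t, HasDerivAt g (G1 t) t)
    (hG1 : ∀ t, HasDerivAt G1 (G2 t) t)
    (hG2 : HasDerivAt G2 (6*B) t₀)
    (hg0 : g t₀ = 0) (hG10 : G1 t₀ = 0) (hG20 : G2 t₀ = 2*A)
    (hA : 0 < A) (hB : B ≠ 0)
    (a : ℝ → ℝ) (ha : ∀ t, a t = Real.sqrt (g t)) :
    Tendsto (fun t => |deriv (deriv a) t / a t|) (𝓝[≠] t₀) atTop := by
  -- derivative of (t - t₀)^n
  have hpow : ∀ (n : ℕ) (t : ℝ), HasDerivAt (fun x => (x - t₀)^n) (n*(t-t₀)^(n-1)) t := by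
    intro n t
    simpa using ((hasDerivAt_id t).sub_const t₀).fun_pow n
  have hsub0 : Tendsto (fun t : ℝ => t - t₀) (𝓝[≠] t₀) (𝓝 0) := by
    have h : Tendsto (fun t : ℝ => t - t₀) (𝓝 t₀) (𝓝 (t₀ - t₀)) :=
      (continuous_id.sub continuous_const).tendsto t₀
    rw [sub_self] at h
    exact h.mono_left nhdsWithin_le_nhds
  -- slope limits
  have LG1 : Tendsto (fun t => G1 t/(t - t₀)) (𝓝[≠] t₀) (𝓝 (2*A)) := by
    have h := hasDerivAt_iff_tendsto_slope.mp (hG1 t₀)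
    rw [hG20] at h
    exact h.congr fun t => by rw [slope_def_field, hG10, sub_zero]
  have LT1 : Tendsto (fun t => (G2 t - 2*A)/(t - t₀)) (𝓝[≠] t₀) (𝓝 (6*B)) := by
    have h := hasDerivAt_iff_tendsto_slope.mp hG2
    exact h.congr fun t => by rw [slope_def_field, hG20]
  -- L'Hopital 1 : g/s² → A
  have Lg : Tendsto (fun t => g t/(t-t₀)^2) (𝓝[≠] t₀) (𝓝 A) := by
    refine HasDerivAt.lhopital_zero_nhdsNE (f' := G1) (g' := fun t => 2*(t-t₀))
      (.of_forall hg) (.of_forall fun t => ?_) ?_ ?_ ?_ ?_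
    · have := hpow 2 t; push_cast at this; convert this using 1 <;> ring
    · filter_upwards [self_mem_nhdsWithin] with t ht
      simp [sub_ne_zero.mpr ht]
    · have := (hg t₀).continuousAt.tendsto
      rw [hg0] at this
      exact this.mono_left nhdsWithin_le_nhds
    · simpa using (hsub0.pow 2)
    · have h := LG1.div_const 2
      rw [show (2*A)/2 = A by ring] at h
      exact h.congr fun x => by rw [div_div, mul_comm (x - t₀) 2]
  -- L'Hopital 2 : (G1 - 2As)/s² → 3B
  have Lr' : Tendsto (fun t => (G1 t - 2*A*(t-t₀))/(t-t₀)^2) (𝓝[≠] t₀) (𝓝 (3*B)) := by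
    refine HasDerivAt.lhopital_zero_nhdsNE (f' := fun t => G2 t - 2*A)
      (g' := fun t => 2*(t-t₀))
      (.of_forall fun t => ?_) (.of_forall fun t => ?_) ?_ ?_ ?_ ?_
    · simpa using (hG1 t).fun_sub (((hasDerivAt_id t).sub_const t₀).const_mul (2*A))
    · have := hpow 2 t; push_cast at this; convert this using 1 <;> ring
    · filter_upwards [self_mem_nhdsWithin] with t ht
      simp [sub_ne_zero.mpr ht]
    · have h : Tendsto (fun t => G1 t - 2*A*(t-t₀)) (𝓝 t₀) (𝓝 (G1 t₀ - 2*A*(t₀-t₀))) :=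
        ((hG1 t₀).continuousAt).sub (by fun_prop)
      rw [hG10] at h
      simpa using h.mono_left nhdsWithin_le_nhds
    · simpa using (hsub0.pow 2)
    · have h := LT1.div_const 2
      rw [show (6*B)/2 = 3*B by ring] at h
      exact h.congr fun x => by rw [div_div, mul_comm (x - t₀) 2]
  -- L'Hopital 3 : (g - As²)/s³ → B
  have Lr : Tendsto (fun t => (g t - A*(t-t₀)^2)/(t-t₀)^3) (𝓝[≠] t₀) (𝓝 B) := by
    refine HasDerivAt.lhopital_zero_nhdsNE (f' := fun t => G1 t - 2*A*(t-t₀))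
      (g' := fun t => 3*(t-t₀)^2)
      (.of_forall fun t => ?_) (.of_forall fun t => ?_) ?_ ?_ ?_ ?_
    · have := (hg t).fun_sub ((hpow 2 t).const_mul A)
      push_cast at this; refine this.congr_deriv ?_; ring
    · have := hpow 3 t; push_cast at this; convert this using 1 <;> ring
    · filter_upwards [self_mem_nhdsWithin] with t ht
      have : t - t₀ ≠ 0 := sub_ne_zero.mpr ht
      positivity
    · have h : Tendsto (fun t => g t - A*(t-t₀)^2) (𝓝 t₀) (𝓝 (g t₀ - A*(t₀-t₀)^2)) :=
        ((hg t₀).continuousAt).sub (by fun_prop)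
      rw [hg0] at h
      simpa using h.mono_left nhdsWithin_le_nhds
    · simpa using (hsub0.pow 3)
    · have h := Lr'.div_const 3
      rw [show (3*B)/3 = B by ring] at h
      exact h.congr fun x => by rw [div_div, mul_comm ((x - t₀)^2) 3]
  -- auxiliary zero limits
  have Lr0 : Tendsto (fun t => (g t - A*(t-t₀)^2)/(t-t₀)^2) (𝓝[≠] t₀) (𝓝 0) := by
    have h := Lr.mul hsub0
    rw [mul_zero] at h
    refine h.congr' ?_
    filter_upwards [self_mem_nhdsWithin] with t ht
    have hs : t - t₀ ≠ 0 := sub_ne_zero.mpr ht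
    field_simp
  have Lr'0 : Tendsto (fun t => (G1 t - 2*A*(t-t₀))/(t-t₀)) (𝓝[≠] t₀) (𝓝 0) := by
    have h := Lr'.mul hsub0
    rw [mul_zero] at h
    refine h.congr' ?_
    filter_upwards [self_mem_nhdsWithin] with t ht
    have hs : t - t₀ ≠ 0 := sub_ne_zero.mpr ht
    field_simp
  -- numerator limit
  have LN : Tendsto (fun t => (2*G2 t*g t - G1 t^2)/(t-t₀)^3) (𝓝[≠] t₀) (𝓝 (4*A*B)) := by
    have h := ((((Lr.const_mul (4*A)).add (LT1.const_mul (2*A))).add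
      ((LT1.mul Lr0).const_mul 2)).sub (Lr'.const_mul (4*A))).sub (Lr'0.mul Lr')
    rw [show 4*A*B + 2*A*(6*B) + 2*(6*B*0) - 4*A*(3*B) - 0*(3*B) = 4*A*B by ring] at h
    refine h.congr' ?_
    filter_upwards [self_mem_nhdsWithin] with t ht
    have hs : t - t₀ ≠ 0 := sub_ne_zero.mpr ht
    field_simp
    ring
  -- eventual positivity of g
  have hgpos : ∀ᶠ t in 𝓝[≠] t₀, 0 < g t := by
    filter_upwards [Lg.eventually (lt_mem_nhds (show A/2 < A by linarith)),
      self_mem_nhdsWithin] with t h1 ht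
    have hs : (0:ℝ) < (t - t₀)^2 := by
      have : t - t₀ ≠ 0 := sub_ne_zero.mpr ht
      positivity
    have h2 : 0 < g t/(t-t₀)^2 := lt_trans (by linarith) h1
    have := mul_pos h2 hs
    rwa [div_mul_cancel₀ _ (ne_of_gt hs)] at this
  -- denominator limit
  have LD : Tendsto (fun t => (t-t₀)^4/(4*g t^2)) (𝓝[≠] t₀) (𝓝 ((4*(A*A))⁻¹)) := by
    have h := ((Lg.mul Lg).const_mul 4).inv₀ (by positivity)
    refine h.congr' ?_
    filter_upwards [hgpos, self_mem_nhdsWithin] with t hgt ht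
    have hs : t - t₀ ≠ 0 := sub_ne_zero.mpr ht
    field_simp
  -- 1/|t-t₀| → ∞
  have hinv : Tendsto (fun t => |t - t₀|⁻¹) (𝓝[≠] t₀) atTop := by
    refine tendsto_inv_nhdsGT_zero.comp ?_
    rw [tendsto_nhdsWithin_iff]
    constructor
    · simpa using hsub0.abs
    · filter_upwards [self_mem_nhdsWithin] with t ht
      exact abs_pos.mpr (sub_ne_zero.mpr ht)
  -- assemble
  have hC : 0 < |4*A*B| * (4*(A*A))⁻¹ := by
    have : (4:ℝ)*A*B ≠ 0 := by
      intro h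
      rcases mul_eq_zero.mp h with h' | h'
      · rcases mul_eq_zero.mp h' with h'' | h'' <;> [norm_num at h''; exact absurd h'' (ne_of_gt hA)]
      · exact hB h'
    have h1 : 0 < |4*A*B| := abs_pos.mpr this
    positivity
  have hfin := Filter.Tendsto.pos_mul_atTop hC ((LN.abs).mul LD) hinv
  refine hfin.congr' ?_
  -- pointwise identification of the second derivative
  filter_upwards [hgpos, self_mem_nhdsWithin] with t hgt ht
  have hs : t - t₀ ≠ 0 := sub_ne_zero.mpr ht
  have hsq : 0 < Real.sqrt (g t) := Real.sqrt_pos.mpr hgt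
  have hgdiff : Differentiable ℝ g := fun x => (hg x).differentiableAt
  have hO : IsOpen {x : ℝ | g x ≠ 0} :=
    isOpen_compl_singleton.preimage hgdiff.continuous
  have hmem : {x : ℝ | g x ≠ 0} ∈ 𝓝 t := hO.mem_nhds (ne_of_gt hgt)
  have hsqrtd : ∀ x, g x ≠ 0 → HasDerivAt (fun y => Real.sqrt (g y))
      (G1 x/(2*Real.sqrt (g x))) x := by
    intro x hx
    have h := (Real.hasDerivAt_sqrt hx).comp x (hg x)
    simp only [Function.comp_def] at h
    have heq : G1 x/(2*Real.sqrt (g x)) = 1/(2*Real.sqrt (g x)) * G1 x := by ring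
    rw [heq]
    exact h
  have haeq : a = fun y => Real.sqrt (g y) := funext ha
  have hEq : deriv a =ᶠ[𝓝 t] fun x => G1 x/(2*Real.sqrt (g x)) := by
    filter_upwards [hmem] with x hx
    rw [haeq]
    exact (hsqrtd x hx).deriv
  have hden : HasDerivAt (fun y => 2*Real.sqrt (g y)) (2*(G1 t/(2*Real.sqrt (g t)))) t :=
    (hsqrtd t (ne_of_gt hgt)).const_mul 2
  have h2nd := (hG1 t).div hden (by positivity)
  have hdd : deriv (deriv a) t =
      (G2 t * (2*Real.sqrt (g t)) - G1 t * (2*(G1 t/(2*Real.sqrt (g t)))))/(2*Real.sqrt (g t))^2 := by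
    rw [hEq.deriv_eq]
    exact h2nd.deriv
  have key : deriv (deriv a) t / a t = (2*G2 t*g t - G1 t^2)/(4*g t^2) := by
    rw [hdd, ha t]
    set s1 := Real.sqrt (g t) with hs1
    have hg2 : g t = s1^2 := (Real.sq_sqrt hgt.le).symm
    rw [hg2]
    have hs1pos : 0 < s1 := hsq
    field_simp
    ring
  rw [key, abs_div, abs_div, abs_pow, abs_of_pos (show (0:ℝ) < 4*g t^2 by positivity)]
  have h4 : (t-t₀)^4 = |t-t₀|^4 := by
    rw [pow_abs]
    exact (abs_of_nonneg (by positivity : (0:ℝ) ≤ (t-t₀)^4)).symm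
  rw [h4]
  have habs : |t-t₀| ≠ 0 := abs_ne_zero.mpr hs
  field_simp

lemma chu_mei_hasDerivAt_re {f : ℝ → ℂ} {c : ℂ} {t : ℝ} (h : HasDerivAt f c t) :
    HasDerivAt (fun s => (f s).re) c.re t := by
  simpa [Function.comp_def] using Complex.reCLM.hasFDerivAt.comp_hasDerivAt t h

lemma chu_mei_hasDerivAt_im {f : ℝ → ℂ} {c : ℂ} {t : ℝ} (h : HasDerivAt f c t) :
    HasDerivAt (fun s => (f s).im) c.im t := by
  simpa [Function.comp_def] using Complex.imCLM.hasFDerivAt.comp_hasDerivAt t h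

/-- If `F` is C², vanishes at `t₀` with nonzero derivative there, and
`Re(F''(t₀) ⬝ conj(F'(t₀))) ≠ 0`, then the Chu–Mei quotient `a''/a` (with `a = |F|`)
is unbounded at the singular point: `|a''/a| → +∞` as `t → t₀`, `t ≠ t₀`. -/
theorem chu_mei_quotient_unbounded_generic
    (F : ℝ → ℂ) (hF : ContDiff ℝ 2 F) (t₀ : ℝ)
    (h0 : F t₀ = 0) (h1 : deriv F t₀ ≠ 0)
    (h2 : (deriv (deriv F) t₀ * (starRingEnd ℂ) (deriv F t₀)).re ≠ 0)
    (a : ℝ → ℝ) (ha : a = fun t => ‖F t‖) :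
    Tendsto (fun t => |deriv (deriv a) t / a t|) (𝓝[≠] t₀) atTop := by
  -- smoothness bookkeeping
  have h12 : (2 : WithTop ℕ∞) = 1 + 1 := by norm_num
  have hF' : Differentiable ℝ F ∧ ContDiff ℝ 1 (deriv F) := by
    rw [h12, contDiff_succ_iff_deriv] at hF
    exact ⟨hF.1, hF.2.2⟩
  obtain ⟨hFd, hdF1⟩ := hF'
  have hdFd : Differentiable ℝ (deriv F) := hdF1.differentiable one_ne_zero
  have hddFc : Continuous (deriv (deriv F)) := (contDiff_one_iff_deriv.mp hdF1).2
  -- component derivatives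
  have hu : ∀ t, HasDerivAt (fun s => (F s).re) ((deriv F t).re) t :=
    fun t => chu_mei_hasDerivAt_re (hFd t).hasDerivAt
  have hv : ∀ t, HasDerivAt (fun s => (F s).im) ((deriv F t).im) t :=
    fun t => chu_mei_hasDerivAt_im (hFd t).hasDerivAt
  have hu1 : ∀ t, HasDerivAt (fun s => (deriv F s).re) ((deriv (deriv F) t).re) t :=
    fun t => chu_mei_hasDerivAt_re (hdFd t).hasDerivAt
  have hv1 : ∀ t, HasDerivAt (fun s => (deriv F s).im) ((deriv (deriv F) t).im) t :=
    fun t => chu_mei_hasDerivAt_im (hdFd t).hasDerivAt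
  -- abbreviations
  set p : ℝ := (deriv F t₀).re with hp
  set q : ℝ := (deriv F t₀).im with hq
  set p2 : ℝ := (deriv (deriv F) t₀).re with hp2
  set q2 : ℝ := (deriv (deriv F) t₀).im with hq2
  -- positivity / nonvanishing
  have hA : 0 < p^2 + q^2 := by
    have hpq : p ≠ 0 ∨ q ≠ 0 := by
      by_contra hc
      push_neg at hc
      exact h1 (Complex.ext hc.1 hc.2)
    rcases hpq with h | h <;> positivity
  have hB : p2*p + q2*q ≠ 0 := by
    intro h
    apply h2
    rw [Complex.mul_re, Complex.conj_re, Complex.conj_im, ← hp, ← hq, ← hp2, ← hq2]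
    nlinarith [h]
  -- first derivative of g
  have hg : ∀ t, HasDerivAt (fun s => (F s).re^2 + (F s).im^2)
      (2*((F t).re*(deriv F t).re + (F t).im*(deriv F t).im)) t := by
    intro t
    have h := ((hu t).fun_pow 2).fun_add ((hv t).fun_pow 2)
    refine h.congr_deriv ?_
    push_cast
    ring
  -- second derivative of g
  have hG1 : ∀ t, HasDerivAt (fun s => 2*((F s).re*(deriv F s).re + (F s).im*(deriv F s).im))
      (2*((deriv F t).re^2 + (deriv F t).im^2)
        + 2*((F t).re*(deriv (deriv F) t).re + (F t).im*(deriv (deriv F) t).im)) t := by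
    intro t
    have h := (((hu t).fun_mul (hu1 t)).fun_add ((hv t).fun_mul (hv1 t))).const_mul (2:ℝ)
    refine h.congr_deriv ?_
    ring
  -- third derivative of g at t₀ (via slopes)
  have hG2 : HasDerivAt (fun t => 2*((deriv F t).re^2 + (deriv F t).im^2)
      + 2*((F t).re*(deriv (deriv F) t).re + (F t).im*(deriv (deriv F) t).im))
      (6*(p2*p + q2*q)) t₀ := by
    have part1 : HasDerivAt (fun t => 2*((deriv F t).re^2 + (deriv F t).im^2))
        (4*(p2*p + q2*q)) t₀ := by
      have h := (((hu1 t₀).fun_pow 2).fun_add ((hv1 t₀).fun_pow 2)).const_mul (2:ℝ)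
      refine h.congr_deriv ?_
      push_cast
      ring
    have part2 : HasDerivAt
        (fun t => 2*((F t).re*(deriv (deriv F) t).re + (F t).im*(deriv (deriv F) t).im))
        (2*(p2*p + q2*q)) t₀ := by
      rw [hasDerivAt_iff_tendsto_slope]
      have hup : Tendsto (fun t => (F t).re/(t - t₀)) (𝓝[≠] t₀) (𝓝 p) := by
        have h := hasDerivAt_iff_tendsto_slope.mp (hu t₀)
        exact h.congr fun t => by rw [slope_def_field, h0]; simp
      have hvq : Tendsto (fun t => (F t).im/(t - t₀)) (𝓝[≠] t₀) (𝓝 q) := by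
        have h := hasDerivAt_iff_tendsto_slope.mp (hv t₀)
        exact h.congr fun t => by rw [slope_def_field, h0]; simp
      have hu2t : Tendsto (fun t => (deriv (deriv F) t).re) (𝓝[≠] t₀) (𝓝 p2) :=
        ((Complex.continuous_re.comp hddFc).tendsto t₀).mono_left nhdsWithin_le_nhds
      have hv2t : Tendsto (fun t => (deriv (deriv F) t).im) (𝓝[≠] t₀) (𝓝 q2) :=
        ((Complex.continuous_im.comp hddFc).tendsto t₀).mono_left nhdsWithin_le_nhds
      have h := ((hup.mul hu2t).add (hvq.mul hv2t)).const_mul (2:ℝ)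
      rw [show (2:ℝ)*(p*p2 + q*q2) = 2*(p2*p + q2*q) by ring] at h
      refine h.congr' ?_
      filter_upwards [self_mem_nhdsWithin] with t ht
      have hs : t - t₀ ≠ 0 := sub_ne_zero.mpr ht
      rw [slope_def_field, h0]
      simp only [Complex.zero_re, Complex.zero_im, zero_mul, add_zero, mul_zero, zero_add, sub_zero]
      field_simp
      all_goals ring
    have h := part1.fun_add part2
    refine h.congr_deriv ?_
    ring
  -- now apply the core lemma
  refine chu_mei_aux (fun s => (F s).re^2 + (F s).im^2)
    (fun s => 2*((F s).re*(deriv F s).re + (F s).im*(deriv F s).im))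
    (fun t => 2*((deriv F t).re^2 + (deriv F t).im^2)
      + 2*((F t).re*(deriv (deriv F) t).re + (F t).im*(deriv (deriv F) t).im))
    t₀ (p^2 + q^2) (p2*p + q2*q) hg hG1 hG2 ?_ ?_ ?_ hA hB a ?_
  · simp [h0]
  · simp [h0]
  · simp [h0, hp, hq]
  · intro t
    rw [ha]
    show ‖F t‖ = √((F t).re^2 + (F t).im^2)
    rw [Complex.norm_def, Complex.normSq_apply]
    ring_nf
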